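/- For every δ ∈ (0,1) there exists a constant c > 0, depending only on δ, such that for every subset Λ ⊆ ℝ^{2d} and all points z, ζ ∈ ℝ^{2d} with z ∈ Λ_δ and ζ ∉ (Λ_δ)_δ one has |z − ζ| ≥ c · max(⟨z⟩, ⟨ζ⟩). -/
import Mathlib


/-!
STATEMENT 7: for every `δ ∈ (0,1)` there is `c > 0`, depending only on `δ`, such that
for every `Λ ⊆ ℝ^{2d}` and all `z ∈ Λ_δ`, `ζ ∉ (Λ_δ)_δ`, one has
`|z − ζ| ≥ c · max(⟨z⟩, ⟨ζ⟩)`.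
-/

open Real

noncomputable section

/-- The Japanese bracket `⟨z⟩ = (1 + |z|²)^{1/2}`. -/
def jap {n : ℕ} (z : EuclideanSpace ℝ (Fin n)) : ℝ := Real.sqrt (1 + ‖z‖ ^ 2)

/-- The `δ`-neighborhood `Γ_δ = {z : |z − z₀| < δ⟨z₀⟩ for some z₀ ∈ Γ}`. -/
def nbhd {n : ℕ} (Γ : Set (EuclideanSpace ℝ (Fin n))) (δ : ℝ) :
    Set (EuclideanSpace ℝ (Fin n)) :=
  {z | ∃ z₀ ∈ Γ, ‖z - z₀‖ < δ * jap z₀}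

lemma jap_nonneg {n : ℕ} (z : EuclideanSpace ℝ (Fin n)) : 0 ≤ jap z :=
  Real.sqrt_nonneg _

lemma jap_lipschitz {n : ℕ} (z ζ : EuclideanSpace ℝ (Fin n)) :
    jap ζ ≤ jap z + ‖ζ - z‖ := by
  set a := ‖z‖ with ha
  set b := ‖ζ‖ with hb
  set t := ‖ζ - z‖ with ht
  have ha0 : 0 ≤ a := norm_nonneg _
  have ht0 : 0 ≤ t := norm_nonneg _
  have hbt : b ≤ a + t := by
    calc b = ‖z + (ζ - z)‖ := by rw [hb]; congr 1; abel
    _ ≤ a + t := norm_add_le _ _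
  have hs : a ≤ Real.sqrt (1 + a ^ 2) := by
    rw [show (1 : ℝ) + a ^ 2 = a ^ 2 + 1 by ring]
    nlinarith [Real.sq_sqrt (by positivity : (0:ℝ) ≤ a ^ 2 + 1),
      Real.sqrt_nonneg (a ^ 2 + 1)]
  have h1 : jap ζ ≤ Real.sqrt (1 + (a + t) ^ 2) := by
    apply Real.sqrt_le_sqrt
    nlinarith [norm_nonneg ζ]
  have h2 : Real.sqrt (1 + (a + t) ^ 2) ≤ Real.sqrt (1 + a ^ 2) + t := by
    rw [show Real.sqrt (1 + a ^ 2) + t = Real.sqrt ((Real.sqrt (1 + a ^ 2) + t) ^ 2) by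
      rw [Real.sqrt_sq (by positivity)]]
    apply Real.sqrt_le_sqrt
    nlinarith [Real.sq_sqrt (by positivity : (0:ℝ) ≤ 1 + a ^ 2)]
  exact le_trans h1 h2

theorem statement7 (d : ℕ) (δ : ℝ) (hδ0 : 0 < δ) (hδ1 : δ < 1) :
    ∃ c : ℝ, 0 < c ∧
      ∀ (Λ : Set (EuclideanSpace ℝ (Fin (2 * d))))
        (z ζ : EuclideanSpace ℝ (Fin (2 * d))),
        z ∈ nbhd Λ δ → ζ ∉ nbhd (nbhd Λ δ) δ →
        c * max (jap z) (jap ζ) ≤ ‖z - ζ‖ := by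
  refine ⟨δ / (1 + δ), by positivity, ?_⟩
  intro Λ z ζ hz hζ
  have hkey : δ * jap z ≤ ‖ζ - z‖ := by
    by_contra h
    exact hζ ⟨z, hz, by linarith⟩
  have heq : ‖z - ζ‖ = ‖ζ - z‖ := norm_sub_rev _ _
  have hlip : jap ζ ≤ jap z + ‖ζ - z‖ := jap_lipschitz z ζ
  have hz0 : 0 ≤ jap z := jap_nonneg z
  have hζ0 : 0 ≤ jap ζ := jap_nonneg ζ
  rw [heq]
  rcases le_total (jap ζ) (jap z) with h | h
  · rw [max_eq_left h]
    have : δ / (1 + δ) ≤ δ := by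
      rw [div_le_iff₀ (by linarith)]
      nlinarith
    nlinarith
  · rw [max_eq_right h]
    rw [div_mul_eq_mul_div, div_le_iff₀ (by linarith)]
    nlinarith
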